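/- Let Γ(n,d) be the graph with vertex set H_n and edges {(x,y) : 0 < d_H(x,y) < d}, and let ϑ'(Γ(n,d)) be the modified Lovász theta number in which feasible matrices are additionally required to have nonnegative entries. Then ϑ'(Γ(n,d)) equals the optimal value of Delsarte's linear program: max{ Σ_{i=0}^n y_i : y_i ≥ 0, y_0 = 1, y_i = 0 for i = 1,…,d−1, Σ_{i=0}^n K_k^n(i) y_i ≥ 0 for all 0 ≤ k ≤ n }. -/

import Mathlib

open Finset

/-- The Krawtchouk polynomial `K_k^n(t) = ∑_{j=0}^k (−1)^j C(t,j) C(n−t,k−j)`,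
evaluated at a natural number `t`. -/
def krawtchouk (n k t : ℕ) : ℝ :=
  ∑ j ∈ Finset.range (k + 1),
    (-1 : ℝ) ^ j * (Nat.choose t j : ℝ) * (Nat.choose (n - t) (k - j) : ℝ)

/-- The graph `Γ(n,d)` on the binary Hamming space `H_n = 𝔽₂ⁿ`, where two words are
adjacent when `0 < d_H(x,y) < d`. -/
def hammingGraph (n d : ℕ) : SimpleGraph (Fin n → ZMod 2) where
  Adj x y := 0 < hammingDist x y ∧ hammingDist x y < d
  symm := by
    constructor
    intro x y h
    rwa [hammingDist_comm]
  loopless := by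
    constructor
    intro x h
    simp [hammingDist_self] at h

/-- The modified Lovász theta number `ϑ'` of a finite graph, in which the feasible
matrices are additionally required to have nonnegative entries. -/
noncomputable def lovaszThetaPrime {V : Type*} [Fintype V] (G : SimpleGraph V) : ℝ :=
  sSup {s | ∃ B : Matrix V V ℝ, B.PosSemidef ∧ (∀ i j, 0 ≤ B i j) ∧
    (∑ i, B i i) = 1 ∧ (∀ i j, G.Adj i j → B i j = 0) ∧ s = ∑ i, ∑ j, B i j}

/-- The optimal value of Delsarte's linear program for parameters `n, d`. -/
noncomputable def delsarteLP (n d : ℕ) : ℝ :=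
  sSup {s | ∃ y : ℕ → ℝ,
    (∀ i, 0 ≤ y i) ∧
    y 0 = 1 ∧
    (∀ i, 1 ≤ i → i ≤ d - 1 → y i = 0) ∧
    (∀ k ≤ n, 0 ≤ ∑ i ∈ Finset.range (n + 1), krawtchouk n k i * y i) ∧
    s = ∑ i ∈ Finset.range (n + 1), y i}


variable {n : ℕ}

/-- character -/
noncomputable def chi (u v : Fin n → ZMod 2) : ℝ :=
  ∏ j, (-1 : ℝ) ^ ((u j * v j).val)

lemma chi_comm (u v : Fin n → ZMod 2) : chi u v = chi v u := by
  unfold chi; congr 1; funext j; rw [mul_comm]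

lemma zmod2_aux (a b c : ZMod 2) :
    (-1 : ℝ) ^ ((a * (b - c)).val) = (-1 : ℝ) ^ ((a*b).val) * (-1:ℝ) ^ ((a*c).val) := by
  rw [← pow_add, neg_one_pow_eq_pow_mod_two, neg_one_pow_eq_pow_mod_two (n := _ + _)]
  congr 1; revert a b c; decide

lemma chi_sub (u x z : Fin n → ZMod 2) : chi u (x - z) = chi u x * chi u z := by
  unfold chi
  rw [← Finset.prod_mul_distrib]
  congr 1; funext j
  exact zmod2_aux (u j) (x j) (z j)

lemma chi_zero_right (u : Fin n → ZMod 2) : chi u 0 = 1 := by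
  unfold chi; simp

lemma chi_sq (u v : Fin n → ZMod 2) : chi u v * chi u v = 1 := by
  have := chi_sub u v v
  simp [chi_zero_right] at this
  linarith [this]

lemma chi_sub_left (u w v : Fin n → ZMod 2) : chi (u - w) v = chi u v * chi w v := by
  rw [chi_comm, chi_sub, chi_comm v u, chi_comm v w]

lemma zmod2_eq_one (a : ZMod 2) (h : a ≠ 0) : a = 1 := by
  revert h; revert a; decide

lemma sum_chi (w : Fin n → ZMod 2) :
    ∑ u : Fin n → ZMod 2, chi u w = if w = 0 then (2 : ℝ)^n else 0 := by
  split_ifs with h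
  · subst h
    rw [Finset.sum_congr rfl (fun u _ => chi_zero_right u)]
    simp [Fintype.card_fun]
  · have ⟨j0, hj0⟩ : ∃ j0, w j0 ≠ 0 := by
      by_contra hc
      push_neg at hc
      exact h (funext hc)
    set e : Fin n → ZMod 2 := fun j => if j = j0 then 1 else 0 with he
    have hchie : chi e w = -1 := by
      unfold chi
      rw [Finset.prod_eq_single j0]
      · rw [zmod2_eq_one (w j0) hj0]
        simp [he, ZMod.val_one]
      · intro b _ hb; simp [he, hb]
      · simp
    refine Finset.sum_involution (fun u _ => u - e) ?_ ?_ (fun u _ => Finset.mem_univ _) ?_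
    · intro u _
      rw [chi_sub_left, hchie]
      ring
    · intro u _ hne heq
      have h0 : e = 0 := sub_eq_self.mp heq
      have := congrFun h0 j0
      simp [he] at this
    · intro u _
      funext j
      show u j - e j - e j = u j
      revert hj0; generalize u j = a; generalize e j = b; intros
      fin_cases a <;> fin_cases b <;> rfl

def suppF (u : Fin n → ZMod 2) : Finset (Fin n) := Finset.univ.filter (fun j => u j ≠ 0)

noncomputable def indF (S : Finset (Fin n)) : Fin n → ZMod 2 := fun j => if j ∈ S then 1 else 0

lemma suppF_card (u : Fin n → ZMod 2) : (suppF u).card = hammingNorm u := rfl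

lemma suppF_indF (S : Finset (Fin n)) : suppF (indF S) = S := by
  ext j; simp [suppF, indF]

lemma indF_suppF (u : Fin n → ZMod 2) : indF (suppF u) = u := by
  funext j
  simp only [indF, suppF, Finset.mem_filter, Finset.mem_univ, true_and]
  by_cases h : u j = 0
  · simp [h]
  · simp [h]
    exact (zmod2_eq_one _ h).symm

lemma chi_eq_pow (u v : Fin n → ZMod 2) :
    chi u v = (-1 : ℝ) ^ ((suppF u ∩ suppF v).card) := by
  unfold chi
  have : ∀ j : Fin n, (-1 : ℝ) ^ ((u j * v j).val) =
      if j ∈ suppF u ∩ suppF v then (-1 : ℝ) else 1 := by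
    intro j
    by_cases hu : u j = 0
    · simp [hu, suppF]
    by_cases hv : v j = 0
    · simp [hv, suppF]
    · rw [zmod2_eq_one _ hu, zmod2_eq_one _ hv]
      simp [suppF, hu, hv, ZMod.val_one]
  rw [Finset.prod_congr rfl (fun j _ => this j), Finset.prod_ite_mem,
    Finset.univ_inter, Finset.prod_const]

lemma count_wt (i : ℕ) :
    (Finset.univ.filter (fun u : Fin n → ZMod 2 => hammingNorm u = i)).card
      = n.choose i := by
  have hcp := Finset.card_powersetCard i (Finset.univ : Finset (Fin n))
  rw [Finset.card_univ, Fintype.card_fin] at hcp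
  rw [← hcp]
  refine Finset.card_bij' (fun u _ => suppF u) (fun S _ => indF S) ?_ ?_ ?_ ?_
  · intro u hu
    simp only [Finset.mem_filter] at hu
    simp [Finset.mem_powersetCard, suppF_card, hu.2]
  · intro S hS
    simp only [Finset.mem_powersetCard] at hS
    rw [Finset.mem_filter, ← suppF_card, suppF_indF]
    exact ⟨Finset.mem_univ _, hS.2⟩
  · intro u _; exact indF_suppF u
  · intro S _; exact suppF_indF S

lemma fiber_count (T : Finset (Fin n)) (k j : ℕ) (hj : j ≤ k) :
    ((Finset.powersetCard k (Finset.univ : Finset (Fin n))).filter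
      (fun S => (S ∩ T).card = j)).card
      = T.card.choose j * ((n - T.card).choose (k - j)) := by
  have hTc : Tᶜ.card = n - T.card := by
    rw [Finset.card_compl, Fintype.card_fin]
  rw [← hTc, ← Finset.card_powersetCard j T, ← Finset.card_powersetCard (k-j) Tᶜ,
    ← Finset.card_product]
  refine Finset.card_bij' (fun S _ => (S ∩ T, S \ T)) (fun p _ => p.1 ∪ p.2) ?_ ?_ ?_ ?_
  · intro S hS
    simp only [Finset.mem_filter, Finset.mem_powersetCard] at hS
    obtain ⟨⟨_, hcard⟩, hj'⟩ := hS
    simp only [Finset.mem_product, Finset.mem_powersetCard]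
    refine ⟨⟨Finset.inter_subset_right, hj'⟩, ?_, ?_⟩
    · intro x hx
      simp only [Finset.mem_sdiff] at hx
      simp [Finset.mem_compl, hx.2]
    · rw [← Finset.sdiff_inter_self_left, Finset.card_sdiff_of_subset Finset.inter_subset_left,
        hcard, hj']
  · intro p hp
    simp only [Finset.mem_product, Finset.mem_powersetCard] at hp
    obtain ⟨⟨h1, hc1⟩, h2, hc2⟩ := hp
    have hdisj : Disjoint p.1 p.2 := by
      rw [Finset.disjoint_left]
      intro x hx1 hx2
      exact (Finset.mem_compl.mp (h2 hx2)) (h1 hx1)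
    simp only [Finset.mem_filter, Finset.mem_powersetCard]
    refine ⟨⟨Finset.subset_univ _, ?_⟩, ?_⟩
    · rw [Finset.card_union_of_disjoint hdisj, hc1, hc2]
      omega
    · have : (p.1 ∪ p.2) ∩ T = p.1 := by
        rw [Finset.union_inter_distrib_right, Finset.inter_eq_left.mpr h1]
        have : p.2 ∩ T = ∅ := by
          rw [← Finset.disjoint_iff_inter_eq_empty, Finset.disjoint_left]
          intro x hx2
          exact Finset.mem_compl.mp (h2 hx2)
        rw [this, Finset.union_empty]
      rw [this, hc1]
  · intro S hS
    simp only [Finset.mem_filter, Finset.mem_powersetCard] at hS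
    exact sup_inf_sdiff S T
  · intro p hp
    simp only [Finset.mem_product, Finset.mem_powersetCard] at hp
    obtain ⟨⟨h1, hc1⟩, h2, hc2⟩ := hp
    have hp2T : p.2 ∩ T = ∅ := by
      rw [← Finset.disjoint_iff_inter_eq_empty, Finset.disjoint_left]
      intro x hx2
      exact Finset.mem_compl.mp (h2 hx2)
    have h1' : (p.1 ∪ p.2) ∩ T = p.1 := by
      rw [Finset.union_inter_distrib_right, Finset.inter_eq_left.mpr h1, hp2T,
        Finset.union_empty]
    have h2' : (p.1 ∪ p.2) \ T = p.2 := by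
      rw [Finset.union_sdiff_distrib, Finset.sdiff_eq_empty_iff_subset.mpr h1,
        Finset.empty_union, Finset.sdiff_eq_self_iff_disjoint.mpr]
      rw [Finset.disjoint_left]
      intro x hx2 hxT
      have := Finset.mem_compl.mp (h2 hx2); exact this hxT
    exact Prod.ext_iff.mpr ⟨h1', h2'⟩

lemma sum_chi_wt (v : Fin n → ZMod 2) (k : ℕ) :
    ∑ u ∈ Finset.univ.filter (fun u : Fin n → ZMod 2 => hammingNorm u = k), chi u v
      = krawtchouk n k (hammingNorm v) := by
  have step1 : ∑ u ∈ Finset.univ.filter (fun u : Fin n → ZMod 2 => hammingNorm u = k), chi u v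
      = ∑ S ∈ Finset.powersetCard k (Finset.univ : Finset (Fin n)),
          (-1 : ℝ) ^ ((S ∩ suppF v).card) := by
    refine Finset.sum_nbij' (fun u => suppF u) (fun S => indF S) ?_ ?_ ?_ ?_ ?_
    · intro u hu
      simp only [Finset.mem_filter] at hu
      simp [Finset.mem_powersetCard, suppF_card, hu.2]
    · intro S hS
      simp only [Finset.mem_powersetCard] at hS
      rw [Finset.mem_filter, ← suppF_card, suppF_indF]
      exact ⟨Finset.mem_univ _, hS.2⟩
    · intro u _; exact indF_suppF u
    · intro S _; exact suppF_indF S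
    · intro u _; exact chi_eq_pow u v
  rw [step1]
  rw [← Finset.sum_fiberwise_of_maps_to
    (g := fun S : Finset (Fin n) => (S ∩ suppF v).card) (t := Finset.range (k+1))
    (fun S hS => by
      simp only [Finset.mem_powersetCard] at hS
      simp only [Finset.mem_range]
      have h1 : (S ∩ suppF v).card ≤ S.card := Finset.card_le_card Finset.inter_subset_left
      omega)]
  unfold krawtchouk
  refine Finset.sum_congr rfl ?_
  intro j hj
  rw [Finset.mem_range] at hj
  have hconst : ∀ S ∈ (Finset.powersetCard k (Finset.univ : Finset (Fin n))).filter
      (fun S => (S ∩ suppF v).card = j), (-1:ℝ) ^ ((S ∩ suppF v).card) = (-1:ℝ)^j := by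
    intro S hS
    simp only [Finset.mem_filter] at hS
    rw [hS.2]
  rw [Finset.sum_congr rfl hconst, Finset.sum_const, fiber_count (suppF v) k j (by omega),
    suppF_card]
  ring

lemma wt_mem_range (v : Fin n → ZMod 2) : hammingNorm v ∈ Finset.range (n+1) := by
  simp only [Finset.mem_range]
  have := hammingNorm_le_card_fintype (x := v)
  simp only [Fintype.card_fin] at this
  omega

lemma sum_wt_fiber (F : (Fin n → ZMod 2) → ℝ) :
    ∑ v : Fin n → ZMod 2, F v
      = ∑ i ∈ Finset.range (n+1),
          ∑ v ∈ Finset.univ.filter (fun v : Fin n → ZMod 2 => hammingNorm v = i), F v :=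
  (Finset.sum_fiberwise_of_maps_to (fun v _ => wt_mem_range v) F).symm

lemma kraw_reciprocity (i k : ℕ) :
    (n.choose k : ℝ) * krawtchouk n i k = (n.choose i : ℝ) * krawtchouk n k i := by
  have key : ∀ a b : ℕ,
      ∑ u ∈ Finset.univ.filter (fun u : Fin n → ZMod 2 => hammingNorm u = a),
        ∑ v ∈ Finset.univ.filter (fun v : Fin n → ZMod 2 => hammingNorm v = b),
          chi u v = (n.choose a : ℝ) * krawtchouk n b a := by
    intro a b
    have : ∀ u ∈ Finset.univ.filter (fun u : Fin n → ZMod 2 => hammingNorm u = a),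
        ∑ v ∈ Finset.univ.filter (fun v : Fin n → ZMod 2 => hammingNorm v = b), chi u v
          = krawtchouk n b a := by
      intro u hu
      simp only [Finset.mem_filter] at hu
      rw [Finset.sum_congr rfl (fun v _ => chi_comm u v), sum_chi_wt u b, hu.2]
    rw [Finset.sum_congr rfl this, Finset.sum_const, count_wt, nsmul_eq_mul]
  have h1 := key k i
  have h2 := key i k
  rw [← h1, ← h2, Finset.sum_comm]
  refine Finset.sum_congr rfl fun v _ => Finset.sum_congr rfl fun u _ => chi_comm u v

lemma dist_mem_range (x z : Fin n → ZMod 2) : hammingDist x z ∈ Finset.range (n+1) := by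
  rw [hammingDist_eq_hammingNorm]
  exact wt_mem_range _

lemma theta_to_lp (d : ℕ) (hd : 1 ≤ d)
    (B : Matrix (Fin n → ZMod 2) (Fin n → ZMod 2) ℝ)
    (hpsd : B.PosSemidef) (hnn : ∀ i j, 0 ≤ B i j) (htr : (∑ i, B i i) = 1)
    (hedge : ∀ i j, (hammingGraph n d).Adj i j → B i j = 0) :
    ∃ y : ℕ → ℝ,
    (∀ i, 0 ≤ y i) ∧
    y 0 = 1 ∧
    (∀ i, 1 ≤ i → i ≤ d - 1 → y i = 0) ∧
    (∀ k ≤ n, 0 ≤ ∑ i ∈ Finset.range (n + 1), krawtchouk n k i * y i) ∧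
    (∑ i, ∑ j, B i j) = ∑ i ∈ Finset.range (n + 1), y i := by
  refine ⟨fun i => ∑ x : Fin n → ZMod 2, ∑ z : Fin n → ZMod 2,
      if hammingDist x z = i then B x z else 0, ?_, ?_, ?_, ?_, ?_⟩
  · intro i
    refine Finset.sum_nonneg fun x _ => Finset.sum_nonneg fun z _ => ?_
    split
    · exact hnn x z
    · exact le_refl 0
  · beta_reduce
    have hx : ∀ x : Fin n → ZMod 2,
        (∑ z : Fin n → ZMod 2, if hammingDist x z = 0 then B x z else 0) = B x x := by
      intro x
      rw [Finset.sum_eq_single x]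
      · simp
      · intro z _ hz
        rw [if_neg]
        simp only [hammingDist_eq_zero]
        exact fun h => hz h.symm
      · simp
    rw [Finset.sum_congr rfl (fun x _ => hx x)]
    exact htr
  · intro i h1 h2
    beta_reduce
    refine Finset.sum_eq_zero fun x _ => Finset.sum_eq_zero fun z _ => ?_
    split_ifs with h
    · exact hedge x z ⟨by omega, by omega⟩
    · rfl
  · intro k hk
    beta_reduce
    have step1 : ∑ i ∈ Finset.range (n + 1), krawtchouk n k i *
        (∑ x : Fin n → ZMod 2, ∑ z : Fin n → ZMod 2,
          if hammingDist x z = i then B x z else 0)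
        = ∑ x : Fin n → ZMod 2, ∑ z : Fin n → ZMod 2,
            krawtchouk n k (hammingDist x z) * B x z := by
      simp only [Finset.mul_sum]
      rw [Finset.sum_comm]
      refine Finset.sum_congr rfl fun x _ => ?_
      rw [Finset.sum_comm]
      refine Finset.sum_congr rfl fun z _ => ?_
      rw [Finset.sum_eq_single (hammingDist x z)]
      · simp
      · intro i _ hi
        rw [if_neg (fun h => hi h.symm), mul_zero]
      · intro hmem
        exact absurd (dist_mem_range x z) hmem
    rw [step1]
    have step2 : ∀ x z : Fin n → ZMod 2, krawtchouk n k (hammingDist x z) * B x z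
        = ∑ u ∈ Finset.univ.filter (fun u : Fin n → ZMod 2 => hammingNorm u = k),
            chi u x * chi u z * B x z := by
      intro x z
      rw [← Finset.sum_mul]
      congr 1
      rw [hammingDist_comm, hammingDist_eq_hammingNorm, neg_add_eq_sub, ← sum_chi_wt (x - z) k]
      exact Finset.sum_congr rfl fun u _ => chi_sub u x z
    rw [Finset.sum_congr rfl fun x _ => Finset.sum_congr rfl fun z _ => step2 x z]
    rw [Finset.sum_congr rfl fun x _ => Finset.sum_comm, Finset.sum_comm]
    refine Finset.sum_nonneg fun u _ => ?_
    have hquad := hpsd.dotProduct_mulVec_nonneg (fun x => chi u x)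
    simp only [dotProduct, Matrix.mulVec, star_trivial, Pi.star_apply] at hquad
    calc (0:ℝ) ≤ ∑ x : Fin n → ZMod 2, chi u x * ∑ z : Fin n → ZMod 2, B x z * chi u z :=
          hquad
    _ = ∑ x : Fin n → ZMod 2, ∑ z : Fin n → ZMod 2, chi u x * chi u z * B x z := by
        refine Finset.sum_congr rfl fun x _ => ?_
        rw [Finset.mul_sum]
        exact Finset.sum_congr rfl fun z _ => by ring

  · beta_reduce
    have hrhs : ∑ i ∈ Finset.range (n+1), ∑ x : Fin n → ZMod 2, ∑ z : Fin n → ZMod 2,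
        (if hammingDist x z = i then B x z else 0)
        = ∑ x : Fin n → ZMod 2, ∑ z : Fin n → ZMod 2, B x z := by
      rw [Finset.sum_comm]
      refine Finset.sum_congr rfl fun x _ => ?_
      rw [Finset.sum_comm]
      refine Finset.sum_congr rfl fun z _ => ?_
      rw [Finset.sum_eq_single (hammingDist x z)]
      · simp
      · intro i _ hi
        exact if_neg (fun h => hi h.symm)
      · intro hmem
        exact absurd (dist_mem_range x z) hmem
    exact hrhs.symm

lemma pi_add_eq_sub (x z : Fin n → ZMod 2) : x + z = x - z := by
  funext j
  show x j + z j = x j - z j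
  generalize x j = a; generalize z j = b
  fin_cases a <;> fin_cases b <;> decide

lemma card_V : Fintype.card (Fin n → ZMod 2) = 2^n := by
  simp [Fintype.card_fun]

lemma choose_pos_real {i : ℕ} (hi : i ≤ n) : (0:ℝ) < (n.choose i : ℝ) := by
  exact_mod_cast Nat.choose_pos hi

lemma sum_sum_mul_const {α : Type*} (s : Finset α) (C : ℝ) (f g : α → ℝ) :
    ∑ x ∈ s, ∑ z ∈ s, C * (f x * g z) = C * ((∑ x ∈ s, f x) * (∑ z ∈ s, g z)) := by
  rw [Finset.sum_mul_sum, Finset.mul_sum]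
  exact Finset.sum_congr rfl fun x _ => by rw [Finset.mul_sum]

lemma lp_to_theta (d : ℕ) (hd : 1 ≤ d) (y : ℕ → ℝ)
    (hy0 : ∀ i, 0 ≤ y i) (hy1 : y 0 = 1)
    (hyz : ∀ i, 1 ≤ i → i ≤ d - 1 → y i = 0)
    (hyk : ∀ k ≤ n, 0 ≤ ∑ i ∈ Finset.range (n + 1), krawtchouk n k i * y i) :
    ∃ B : Matrix (Fin n → ZMod 2) (Fin n → ZMod 2) ℝ, B.PosSemidef ∧ (∀ i j, 0 ≤ B i j) ∧
      (∑ i, B i i) = 1 ∧ (∀ i j, (hammingGraph n d).Adj i j → B i j = 0) ∧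
      ∑ i ∈ Finset.range (n + 1), y i = ∑ i, ∑ j, B i j := by
  set g : ℕ → ℝ := fun i => y i / (n.choose i) with hg
  set c : ℝ := ((2:ℝ)^n)⁻¹ with hc
  have hcpos : (0:ℝ) < c := by positivity
  have hc2 : c * (2:ℝ)^n = 1 := by rw [hc]; field_simp
  set B : Matrix (Fin n → ZMod 2) (Fin n → ZMod 2) ℝ :=
    fun x z => c * g (hammingDist x z) with hB
  set lam : (Fin n → ZMod 2) → ℝ := fun u => ∑ v, g (hammingNorm v) * chi u v with hlam
  have hgnn : ∀ i, 0 ≤ g i := fun i => div_nonneg (hy0 i) (Nat.cast_nonneg _)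
  -- lam is nonnegative
  have lam_nonneg : ∀ u, 0 ≤ lam u := by
    intro u
    set k : ℕ := hammingNorm u with hk
    have hkn : k ≤ n := by
      have := hammingNorm_le_card_fintype (x := u)
      simpa [Fintype.card_fin] using this
    have hCk : (0:ℝ) < (n.choose k : ℝ) := choose_pos_real hkn
    have step : lam u = ∑ i ∈ Finset.range (n+1), g i * krawtchouk n i k := by
      simp only [hlam]
      rw [sum_wt_fiber (fun v => g (hammingNorm v) * chi u v)]
      refine Finset.sum_congr rfl fun i _ => ?_
      have hcong : ∀ v ∈ Finset.univ.filter (fun v : Fin n → ZMod 2 => hammingNorm v = i),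
          g (hammingNorm v) * chi u v = g i * chi v u := by
        intro v hv
        simp only [Finset.mem_filter] at hv
        rw [hv.2, chi_comm]
      rw [Finset.sum_congr rfl hcong, ← Finset.mul_sum, sum_chi_wt u i, hk]
    have step2 : (n.choose k : ℝ) * lam u
        = ∑ i ∈ Finset.range (n+1), krawtchouk n k i * y i := by
      rw [step, Finset.mul_sum]
      refine Finset.sum_congr rfl fun i hi => ?_
      rw [Finset.mem_range] at hi
      have hCi : (0:ℝ) < (n.choose i : ℝ) := choose_pos_real (by omega)
      have hrec := kraw_reciprocity (n := n) i k
      simp only [hg]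
      field_simp
      linear_combination (y i) * hrec
    have h0 : 0 ≤ (n.choose k : ℝ) * lam u := step2 ▸ hyk k hkn
    nlinarith
  -- entry formula
  have entry : ∀ x z : Fin n → ZMod 2,
      B x z = c * c * ∑ u : Fin n → ZMod 2, lam u * (chi u x * chi u z) := by
    intro x z
    have key : ∑ u : Fin n → ZMod 2, lam u * (chi u x * chi u z)
        = (2:ℝ)^n * g (hammingDist x z) := by
      have swap : ∑ u : Fin n → ZMod 2, lam u * (chi u x * chi u z)
          = ∑ v : Fin n → ZMod 2, g (hammingNorm v)
              * ∑ u : Fin n → ZMod 2, chi u (v - x - z) := by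
        simp only [hlam]
        simp only [Finset.sum_mul]
        rw [Finset.sum_comm]
        refine Finset.sum_congr rfl fun v _ => ?_
        rw [Finset.mul_sum]
        refine Finset.sum_congr rfl fun u _ => ?_
        rw [chi_sub, chi_sub]
        ring
      rw [swap]
      rw [Finset.sum_eq_single (x + z)]
      · rw [show (x + z) - x - z = 0 from by ring]
        rw [sum_chi, if_pos rfl, pi_add_eq_sub, hammingDist_comm, hammingDist_eq_hammingNorm, neg_add_eq_sub]
        ring
      · intro v _ hv
        have hne : v - x - z ≠ 0 := by
          intro h0
          apply hv
          rw [sub_sub] at h0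
          exact sub_eq_zero.mp h0
        rw [sum_chi, if_neg hne, mul_zero]
      · intro hmem
        exact absurd (Finset.mem_univ _) hmem
    rw [key]
    calc B x z = c * g (hammingDist x z) := rfl
      _ = c * (c * (2:ℝ)^n) * g (hammingDist x z) := by rw [hc2]; ring
      _ = c * c * ((2:ℝ)^n * g (hammingDist x z)) := by ring
  have hcard : (Finset.univ : Finset (Fin n → ZMod 2)).card = 2^n := by
    rw [Finset.card_univ, card_V]
  refine ⟨B, Matrix.PosSemidef.of_dotProduct_mulVec_nonneg ?_ ?_, ?_, ?_, ?_, ?_⟩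
  · -- Hermitian
    ext x z
    show c * g (hammingDist z x) = c * g (hammingDist x z)
    rw [hammingDist_comm]
  · -- quadratic form
    intro a
    simp only [dotProduct, Matrix.mulVec, star_trivial, Pi.star_apply]
    have expand : ∀ x z : Fin n → ZMod 2, a x * (B x z * a z)
        = ∑ u : Fin n → ZMod 2,
            (c * c * lam u) * ((a x * chi u x) * (a z * chi u z)) := by
      intro x z
      rw [entry x z, Finset.mul_sum, Finset.sum_mul, Finset.mul_sum]
      refine Finset.sum_congr rfl fun u _ => ?_
      ring
    have total : ∑ x : Fin n → ZMod 2, a x * ∑ z : Fin n → ZMod 2, B x z * a z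
        = ∑ u : Fin n → ZMod 2, (c * c * lam u)
            * ((∑ x : Fin n → ZMod 2, a x * chi u x)
              * (∑ z : Fin n → ZMod 2, a z * chi u z)) := by
      have h1 : ∀ x : Fin n → ZMod 2, a x * ∑ z : Fin n → ZMod 2, B x z * a z
          = ∑ z : Fin n → ZMod 2, a x * (B x z * a z) := by
        intro x; rw [Finset.mul_sum]
      rw [Finset.sum_congr rfl fun x _ => h1 x]
      rw [Finset.sum_congr rfl fun x _ =>
        Finset.sum_congr rfl fun z _ => expand x z]
      rw [Finset.sum_congr rfl fun x _ => Finset.sum_comm, Finset.sum_comm]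
      exact Finset.sum_congr rfl fun u _ =>
        sum_sum_mul_const Finset.univ (c * c * lam u)
          (fun x => a x * chi u x) (fun z => a z * chi u z)
    rw [total]
    refine Finset.sum_nonneg fun u _ => ?_
    have hsq : (∑ x : Fin n → ZMod 2, a x * chi u x)
        * (∑ z : Fin n → ZMod 2, a z * chi u z)
        = (∑ x : Fin n → ZMod 2, a x * chi u x)^2 := by rw [sq]
    rw [hsq]
    have := lam_nonneg u
    positivity
  · -- nonneg entries
    intro x z
    exact mul_nonneg hcpos.le (hgnn _)
  · -- trace
    have hdiag : ∀ x : Fin n → ZMod 2, B x x = c := by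
      intro x
      simp only [hB, hammingDist_self, hg, hy1]
      simp
    rw [Finset.sum_congr rfl fun x _ => hdiag x, Finset.sum_const, hcard, nsmul_eq_mul, hc]
    push_cast
    field_simp
  · -- edges
    intro x z hadj
    obtain ⟨h1, h2⟩ := hadj
    have hy' : y (hammingDist x z) = 0 := hyz _ (by omega) (by omega)
    simp only [hB, hg]
    rw [hy']
    simp
  · -- total sum
    have inner : ∀ x : Fin n → ZMod 2, ∑ z : Fin n → ZMod 2, B x z
        = c * ∑ i ∈ Finset.range (n+1), (n.choose i : ℝ) * g i := by
      intro x
      have h1 : ∑ z : Fin n → ZMod 2, B x z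
          = ∑ w : Fin n → ZMod 2, c * g (hammingNorm w) := by
        rw [← Equiv.sum_comp (Equiv.subLeft x) (fun w => c * g (hammingNorm w))]
        refine Finset.sum_congr rfl fun z _ => ?_
        simp only [hB, Equiv.subLeft_apply]
        rw [hammingDist_comm, hammingDist_eq_hammingNorm, neg_add_eq_sub]
      rw [h1, ← Finset.mul_sum]
      congr 1
      rw [sum_wt_fiber (fun w => g (hammingNorm w))]
      refine Finset.sum_congr rfl fun i _ => ?_
      have hcong : ∀ v ∈ Finset.univ.filter (fun v : Fin n → ZMod 2 => hammingNorm v = i),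
          g (hammingNorm v) = g i := by
        intro v hv
        simp only [Finset.mem_filter] at hv
        rw [hv.2]
      rw [Finset.sum_congr rfl hcong, Finset.sum_const, count_wt, nsmul_eq_mul]
    rw [Finset.sum_congr rfl fun x _ => inner x, Finset.sum_const, hcard, nsmul_eq_mul]
    have hyi : ∀ i ∈ Finset.range (n+1), (n.choose i : ℝ) * g i = y i := by
      intro i hi
      rw [Finset.mem_range] at hi
      simp only [hg]
      have := choose_pos_real (n := n) (i := i) (by omega)
      field_simp
    rw [Finset.sum_congr rfl hyi]
    rw [show ((2^n : ℕ) : ℝ) * (c * ∑ i ∈ Finset.range (n+1), y i)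
        = (((2^n : ℕ) : ℝ) * c) * ∑ i ∈ Finset.range (n+1), y i from by ring]
    have : ((2^n : ℕ) : ℝ) * c = 1 := by push_cast; rw [mul_comm]; exact hc2
    rw [this, one_mul]

/-- The symmetrized modified theta number of the Hamming graph coincides with the
optimal value of Delsarte's linear program: `ϑ'(Γ(n,d)) = LP(n,d)`. -/
theorem lovaszThetaPrime_hammingGraph_eq_delsarteLP (n d : ℕ) (hd : 1 ≤ d) :
    lovaszThetaPrime (hammingGraph n d) = delsarteLP n d := by
  unfold lovaszThetaPrime delsarteLP
  congr 1
  ext s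
  constructor
  · rintro ⟨B, hpsd, hnn, htr, hedge, rfl⟩
    obtain ⟨y, h1, h2, h3, h4, h5⟩ := theta_to_lp d hd B hpsd hnn htr hedge
    exact ⟨y, h1, h2, h3, h4, h5⟩
  · rintro ⟨y, h1, h2, h3, h4, rfl⟩
    obtain ⟨B, hpsd, hnn, htr, hedge, h5⟩ := lp_to_theta d hd y h1 h2 h3 h4
    exact ⟨B, hpsd, hnn, htr, hedge, h5⟩
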